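/- arXiv:math/0702654 — 2 statements merged into one kernel-verified Lean document; each statement's English description precedes it below -/
import Mathlib

section
/- Let R be an associative ring, 𝒜 a ring of central cohomology operations on D(R), φ ∈ 𝒜^d a homogeneous element, and M, N complexes of R-modules. Set ℳ = Ext*_R(M,N). Then there is an exact sequence of graded 𝒜-modules 0 → (ℳ/φℳ)(−1) → Ext*_R(K(φ; M), N) → (0 :_ℳ φ)(−d) → 0, where (0 :_ℳ φ) = { x ∈ ℳ : φx = 0 } and ℳ(j) denotes the twist with ℳ(j)^i = ℳ^{i+j}. -/
/-! Core framework: complexes of modules, semiprojective complexes, hard truncations,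
syzygy complexes, the derived category, Ext groups, central cohomology operations,
graded supports and thick subcategories.

Conventions: we use cochain complexes indexed by `ℤ`; the homological degree `i`
of the paper corresponds to the cochain degree `-i`, so that the homological
shift `Σ^d` is the categorical shift `⟦d⟧` and the homological hard truncation
`P_{⩾ n}` is the cochain hard truncation in degrees `⩽ -n`. -/

open CategoryTheory Limits Pretriangulated

universe w v u

namespace CohSupp

variable (R : Type u) [Ring R]

/-- Complexes of left `R`-modules (cochain convention). -/
abbrev Cx := CochainComplex (ModuleCat.{u} R) ℤ

variable {R}

/-- A complex `P` is semiprojective if each component is a projective module and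
`Hom_R(P, -)` preserves quasi-isomorphisms, i.e. composition with any
quasi-isomorphism induces a bijection on homotopy classes of morphisms from `P`. -/
def Semiprojective (P : Cx R) : Prop :=
  (∀ i : ℤ, Projective (P.X i)) ∧
    ∀ (N N' : Cx R) (g : N ⟶ N'), QuasiIso g →
      Function.Bijective
        (fun f : (HomotopyCategory.quotient (ModuleCat.{u} R) (ComplexShape.up ℤ)).obj P ⟶
            (HomotopyCategory.quotient (ModuleCat.{u} R) (ComplexShape.up ℤ)).obj N =>
          f ≫ (HomotopyCategory.quotient (ModuleCat.{u} R) (ComplexShape.up ℤ)).map g)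

/-- Hard (stupid) truncation of a cochain complex, keeping the components in
cochain degrees `⩽ m`. -/
noncomputable def hardTruncLE (P : Cx R) (m : ℤ) : Cx R where
  X i := if i ≤ m then P.X i else ModuleCat.of R PUnit
  d i j :=
    if hi : i ≤ m then
      if hj : j ≤ m then
        eqToHom (if_pos hi) ≫ P.d i j ≫ eqToHom (if_pos hj).symm
      else 0
    else 0
  shape i j h := by
    try dsimp only
    by_cases hi : i ≤ m <;> by_cases hj : j ≤ m <;> simp [hi, hj, P.shape i j h]
  d_comp_d' i j k _ _ := by
    try dsimp only
    by_cases hi : i ≤ m <;> by_cases hj : j ≤ m <;> by_cases hk : k ≤ m <;>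
      simp [hi, hj, hk]

/-- The hard truncation `P_{⩾ n}` in *homological* degrees `⩾ n`, i.e. in cochain
degrees `⩽ -n`. -/
noncomputable def truncGE (P : Cx R) (n : ℤ) : Cx R := hardTruncLE P (-n)

/-- The `n`-th syzygy complex `Ω^n = Σ^{-n}(P_{⩾ n})` associated to a
(semiprojective) complex `P`. -/
noncomputable def syzygy (P : Cx R) (n : ℤ) : Cx R := (truncGE P n)⟦(-n : ℤ)⟧

/-- The complex consisting of a single module placed in homological degree `n`
(cochain degree `-n`); this is `Σ^n` applied to the module. -/
noncomputable def singleMod (n : ℤ) (W : ModuleCat.{u} R) : Cx R :=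
  (HomologicalComplex.single (ModuleCat.{u} R) (ComplexShape.up ℤ) (-n)).obj W

/-- A module viewed as a complex concentrated in degree `0`. -/
noncomputable def ofMod (W : Type u) [AddCommGroup W] [Module R W] : Cx R :=
  singleMod 0 (ModuleCat.of R W)

variable (R) in
/-- The ring `R`, viewed as a complex concentrated in degree `0`. -/
noncomputable def selfCx : Cx R := ofMod R

/-- The homology of a complex in *homological* degree `i` (cochain degree `-i`). -/
noncomputable def hgy (M : Cx R) (i : ℤ) : ModuleCat.{u} R := M.homology (-i)

/-- The total homology of `M` is a finitely generated `R`-module: each homology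
module is finitely generated and all but finitely many vanish. -/
def FGTotalHomology (M : Cx R) : Prop :=
  (∀ i : ℤ, Module.Finite R (M.homology i)) ∧
    ∃ b : ℕ, ∀ i : ℤ, (b : ℤ) ≤ |i| → IsZero (M.homology i)

/-- `M` has bounded homology. -/
def BoundedHomology (M : Cx R) : Prop :=
  ∃ b : ℕ, ∀ i : ℤ, (b : ℤ) ≤ |i| → IsZero (M.homology i)

section Derived

variable [HasDerivedCategory.{w} (ModuleCat.{u} R)]

variable (R) in
/-- The derived category of `R`. -/
abbrev D := DerivedCategory (ModuleCat.{u} R)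

/-- The localization functor. -/
noncomputable abbrev dQ : Cx R ⥤ D R := DerivedCategory.Q

/-- `Ext^i` of two objects of the derived category:
morphisms `X ⟶ Y⟦i⟧`. -/
abbrev ExtO (X Y : D R) (i : ℤ) : Type w := X ⟶ Y⟦i⟧

/-- Transport along an equality of degrees. -/
def extCast {X Y : D R} {i j : ℤ} (h : i = j) (x : ExtO X Y i) : ExtO X Y j := h ▸ x

/-- The (Yoneda) composition product on graded Ext: for `α` of degree `i`
and `β` of degree `j`, `excomp h β α` is the composite `β ∘ α` of degree `k = i + j`. -/
noncomputable def excomp {X Y Z : D R} {i j k : ℤ} (h : i + j = k)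
    (β : ExtO Y Z j) (α : ExtO X Y i) : ExtO X Z k :=
  α ≫ β⟦i⟧' ≫ (shiftFunctorAdd' (D R) j i k (by omega)).inv.app Z

variable (R) in
/-- A ring of central cohomology operations on `D(R)`: a non-negatively graded
commutative ring `A` (with grading `ℬ`, concentrated in even degrees unless `2 = 0`
in `A`), together with graded ring homomorphisms `ζ_X : A → Ext*(X,X)` for every
object `X` of `D(R)`, satisfying the centrality condition
`ξ · ζ_X(a) = ζ_Y(a) · ξ`. -/
structure CentralOps (A : Type v) [CommRing A] (ℬ : ℤ → AddSubgroup A) [GradedRing ℬ] where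
  nonneg : ∀ i : ℤ, i < 0 → ℬ i = ⊥
  parity : (∀ i : ℤ, Odd i → ℬ i = ⊥) ∨ (∀ a : A, a + a = 0)
  zeta : ∀ (X : D R) (i : ℤ), ℬ i → ExtO X X i
  zeta_add : ∀ (X : D R) (i : ℤ) (a b : ℬ i), zeta X i (a + b) = zeta X i a + zeta X i b
  zeta_one : ∀ X : D R, zeta X 0 ⟨1, SetLike.one_mem_graded ℬ⟩ = (shiftFunctorZero (D R) ℤ).inv.app X
  zeta_mul : ∀ (X : D R) (i j : ℤ) (a : ℬ i) (b : ℬ j),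
    zeta X (i + j) ⟨(a : A) * (b : A), SetLike.mul_mem_graded a.2 b.2⟩ =
      excomp rfl (zeta X j b) (zeta X i a)
  central : ∀ (X Y : D R) (d i : ℤ) (ξ : ExtO X Y d) (a : ℬ i),
    excomp rfl ξ (zeta X i a) = excomp (by omega) (zeta Y i a) ξ

variable {A : Type v} [CommRing A] {ℬ : ℤ → AddSubgroup A} [GradedRing ℬ]

/-- The action of a homogeneous element `a ∈ A^i` on `Ext^j(X,Y)`, making the
graded Ext a graded `A`-module. -/
noncomputable def act (Z : CentralOps R A ℬ) {X Y : D R} {i j : ℤ}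
    (a : ℬ i) (x : ExtO X Y j) : ExtO X Y (i + j) :=
  excomp (by omega) (Z.zeta Y i a) x

/-- A graded `A`-submodule of `Ext*(X,Y)`. -/
structure ExtSub (Z : CentralOps R A ℬ) (X Y : D R) where
  carrier : ∀ j : ℤ, AddSubgroup (ExtO X Y j)
  act_mem : ∀ {i j : ℤ} (a : ℬ i) {x : ExtO X Y j}, x ∈ carrier j → act Z a x ∈ carrier (i + j)

/-- The graded `A`-module `Ext*(X,Y)` is noetherian: every ascending chain of
graded submodules stabilizes. -/
def NoethAll (Z : CentralOps R A ℬ) (X Y : D R) : Prop :=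
  ∀ f : ℕ → ExtSub Z X Y,
    (∀ (n : ℕ) (j : ℤ), (f n).carrier j ≤ (f (n + 1)).carrier j) →
    ∃ n : ℕ, ∀ m : ℕ, n ≤ m → ∀ j : ℤ, (f m).carrier j = (f n).carrier j

/-- The graded `A`-module `Ext^{⩾ j₀}(X,Y)` is noetherian. -/
def NoethFrom (Z : CentralOps R A ℬ) (X Y : D R) (j₀ : ℤ) : Prop :=
  ∀ f : ℕ → ExtSub Z X Y,
    (∀ (n : ℕ) (j : ℤ), j < j₀ → (f n).carrier j = ⊥) →
    (∀ (n : ℕ) (j : ℤ), (f n).carrier j ≤ (f (n + 1)).carrier j) →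
    ∃ n : ℕ, ∀ m : ℕ, n ≤ m → ∀ j : ℤ, (f m).carrier j = (f n).carrier j

/-- The graded `A`-module `Ext*(X,Y)` is eventually noetherian:
`Ext^{⩾ j}(X,Y)` is a noetherian `A`-module for all `j ≫ 0`. -/
def EvNoeth (Z : CentralOps R A ℬ) (X Y : D R) : Prop :=
  ∃ j₀ : ℤ, ∀ j : ℤ, j₀ ≤ j → NoethFrom Z X Y j

/-- The graded `A`-module `Ext*(X,Y)` is eventually zero. -/
def EvZero (X Y : D R) : Prop :=
  ∃ j₀ : ℤ, ∀ j : ℤ, j₀ ≤ j → Subsingleton (ExtO X Y j)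

end Derived

variable {A : Type v} [CommRing A] (ℬ : ℤ → AddSubgroup A) [GradedRing ℬ]

/-- `Proj A`: the homogeneous prime ideals of `A` not containing `A^{⩾ 1}`. -/
def ProjSet : Set (Ideal A) :=
  {p | p.IsPrime ∧ Ideal.IsHomogeneous ℬ p ∧ ¬ ∀ i : ℤ, 1 ≤ i → (ℬ i : Set A) ⊆ p}

/-- Zariski closed subsets of `Proj A`: zero sets of homogeneous ideals. -/
def ProjClosed (C : Set (Ideal A)) : Prop :=
  ∃ J : Ideal A, Ideal.IsHomogeneous ℬ J ∧ C = {p | p ∈ ProjSet ℬ ∧ J ≤ p}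

/-- `X` is a closed subset of the subspace `S` of `Proj A`. -/
def ClosedIn (X S : Set (Ideal A)) : Prop :=
  X ⊆ S ∧ ∃ C : Set (Ideal A), ProjClosed ℬ C ∧ X = S ∩ C

/-- `X` is an irreducible subset of `Proj A`. -/
def IrreducibleIn (X : Set (Ideal A)) : Prop :=
  X.Nonempty ∧ ∀ C₁ C₂ : Set (Ideal A), ProjClosed ℬ C₁ → ProjClosed ℬ C₂ →
    X ⊆ C₁ ∪ C₂ → X ⊆ C₁ ∨ X ⊆ C₂

section Derived2

variable [HasDerivedCategory.{w} (ModuleCat.{u} R)]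
variable {ℬ}

/-- The cohomological support `Supp*_A(X,Y) ⊆ Proj A`: the primes `p` such that the
localization of the graded `A`-module `Ext*(X,Y)` at `p` is nonzero, i.e. such that
some homogeneous element of `Ext*(X,Y)` is not annihilated by any homogeneous
element outside of `p`. -/
noncomputable def supp (Z : CentralOps R A ℬ) (X Y : D R) : Set (Ideal A) :=
  {p | p ∈ ProjSet ℬ ∧ ∃ (j : ℤ) (x : ExtO X Y j), x ≠ 0 ∧
    ∀ (i : ℤ) (s : ℬ i), (s : A) ∉ p → act Z s x ≠ 0}

/-- A thick subcategory of `D(R)` (as a set of objects): closed under isomorphisms,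
shifts, mapping cones (two-out-of-three in distinguished triangles) and retracts
(direct summands), and containing the zero objects. -/
def IsThickSet (S : Set (D R)) : Prop :=
  (∀ X : D R, IsZero X → X ∈ S) ∧
  (∀ X Y : D R, (X ≅ Y) → X ∈ S → Y ∈ S) ∧
  (∀ X : D R, X ∈ S → X⟦(1 : ℤ)⟧ ∈ S ∧ X⟦(-1 : ℤ)⟧ ∈ S) ∧
  (∀ T : Triangle (D R), T ∈ (distTriang (D R)) → T.obj₁ ∈ S → T.obj₂ ∈ S → T.obj₃ ∈ S) ∧
  (∀ (X Y : D R) (ι : X ⟶ Y) (ρ : Y ⟶ X), ι ≫ ρ = 𝟙 X → Y ∈ S → X ∈ S)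

/-- `X` belongs to the thick closure of `G` in `D(R)`. -/
def InThick (G X : D R) : Prop := ∀ S : Set (D R), IsThickSet S → G ∈ S → X ∈ S

end Derived2

end CohSupp

namespace CohSupp

namespace CohSuppAux

set_option linter.unusedSectionVars false

variable {C : Type*} [Category C] [Preadditive C] [HasShift C ℤ]
  [∀ n : ℤ, (shiftFunctor C n).Additive]

/-- Transport along an equality of degrees. -/
def shCast {X Y : C} {i j : ℤ} (e : i = j) (x : ShiftedHom X Y i) : ShiftedHom X Y j := e ▸ x

lemma shCast_rfl {X Y : C} {i : ℤ} (x : ShiftedHom X Y i) : shCast rfl x = x := rfl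

lemma shCast_zero {X Y : C} {i j : ℤ} (e : i = j) : shCast (X := X) (Y := Y) e 0 = 0 := by
  subst e; rfl

lemma shCast_eq_zero_iff {X Y : C} {i j : ℤ} (e : i = j) (x : ShiftedHom X Y i) :
    shCast e x = 0 ↔ x = 0 := by subst e; exact Iff.rfl

lemma shCast_comp {X Y Z : C} {a b c c' : ℤ} (f : ShiftedHom X Y a) (y : ShiftedHom Y Z b)
    (hc : b + a = c) (e : c = c') :
    shCast e (f.comp y hc) = f.comp y (by omega) := by subst e; rfl

lemma comp_shCast {X Y Z : C} {a b b' c : ℤ} (f : ShiftedHom X Y a) (y : ShiftedHom Y Z b)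
    (e : b = b') (hb : b' + a = c) :
    f.comp (shCast e y) hb = f.comp y (by omega) := by subst e; rfl

variable (C) in
/-- The canonical shifted hom `Y ⟶ (Y⟦e⟧)⟦-e⟧` of degree `-e`. -/
noncomputable def iotaSh (e : ℤ) (Y : C) : ShiftedHom Y (Y⟦e⟧) (-e) :=
  (shiftFunctorCompIsoId C e (-e) (by omega)).inv.app Y

/-- The identity of `Y⟦e⟧`, viewed as a shifted hom of degree `e` from `Y⟦e⟧` to `Y`. -/
def upsSh (e : ℤ) (Y : C) : ShiftedHom (Y⟦e⟧) Y e := 𝟙 (Y⟦e⟧)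

lemma comp_iotaSh {X Y : C} {e : ℤ} (f : ShiftedHom X Y e) :
    f.comp (iotaSh C e Y) (by omega) = ShiftedHom.mk₀ 0 rfl (f : X ⟶ Y⟦e⟧) := by
  dsimp only [ShiftedHom.comp, iotaSh]
  rw [shift_shiftFunctorCompIsoId_inv_app]
  simp [shiftFunctorCompIsoId, ShiftedHom.mk₀, shiftFunctorZero']

lemma iotaSh_comp_upsSh {Y : C} (e : ℤ) :
    (iotaSh C e Y).comp (upsSh e Y) (by omega) = ShiftedHom.mk₀ 0 rfl (𝟙 Y) := by
  dsimp only [ShiftedHom.comp, iotaSh, upsSh]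
  simp [shiftFunctorCompIsoId, ShiftedHom.mk₀, shiftFunctorZero']

lemma hom_comp_upsSh {X Y Z : C} {e m k : ℤ} (f : X ⟶ Y⟦e⟧) (x : ShiftedHom Y Z m)
    (p : m + e = k) :
    f ≫ (upsSh e Y).comp x p = ShiftedHom.comp (f : ShiftedHom X Y e) x p := by
  simp [ShiftedHom.comp, upsSh]

lemma hom_comp_left {A X Y Z : C} {b c k : ℤ} (u : A ⟶ X) (z : ShiftedHom X Y b)
    (y : ShiftedHom Y Z c) (p : c + b = k) :
    ShiftedHom.comp ((u ≫ z : ShiftedHom A Y b)) y p = u ≫ (z.comp y p) := by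
  simp [ShiftedHom.comp]

lemma map_comp_upsSh {A B Z : C} {e m k : ℤ} (u : A ⟶ B) (w : ShiftedHom B Z m)
    (p : m + e = k) :
    u⟦e⟧' ≫ (upsSh e B).comp w p = (upsSh e A).comp ((u ≫ w : ShiftedHom A Z m)) p := by
  simp [ShiftedHom.comp, upsSh]

lemma comp_left_injective {X Y Z : C} {e m k : ℤ} (t : ShiftedHom X Y e)
    (ht : IsIso (show X ⟶ Y⟦e⟧ from t)) (p : m + e = k) :
    Function.Injective (fun x : ShiftedHom Y Z m => t.comp x p) := by
  intro x x' hxx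
  haveI := ht
  simp only [ShiftedHom.comp] at hxx
  rw [cancel_epi (show X ⟶ Y⟦e⟧ from t)] at hxx
  rw [cancel_mono] at hxx
  exact (shiftFunctor C e).map_injective hxx

lemma comp_iotaSh_comp {X Y Z : C} {e m k m' : ℤ} (f : ShiftedHom X Y e)
    (v : ShiftedHom (Y⟦e⟧) Z m) (p : m + -e = k) (p2 : k + e = m') (em : m = m') :
    f.comp ((iotaSh C e Y).comp v p) p2 = shCast em ((f : X ⟶ Y⟦e⟧) ≫ v) := by
  subst em
  rw [shCast_rfl]
  have h1 : f.comp (iotaSh C e Y) (neg_add_cancel e) = ShiftedHom.mk₀ 0 rfl (f : X ⟶ Y⟦e⟧) :=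
    comp_iotaSh f
  calc f.comp ((iotaSh C e Y).comp v p) p2
      = (f.comp (iotaSh C e Y) (neg_add_cancel e)).comp v (by omega) :=
        (ShiftedHom.comp_assoc f (iotaSh C e Y) v (neg_add_cancel e) p (by omega)).symm
    _ = (ShiftedHom.mk₀ 0 rfl (f : X ⟶ Y⟦e⟧)).comp v (by omega) := by rw [h1]
    _ = (f : X ⟶ Y⟦e⟧) ≫ v := ShiftedHom.mk₀_comp 0 rfl _ v

end CohSuppAux


section Bridge

variable {R : Type u} [Ring R] [HasDerivedCategory.{w} (ModuleCat.{u} R)]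
  {A : Type v} [CommRing A] {ℬ : ℤ → AddSubgroup A} [GradedRing ℬ]

lemma extCast_eq_shCast {X Y : D R} {i j : ℤ} (e : i = j) (x : ExtO X Y i) :
    extCast e x = CohSuppAux.shCast e x := by subst e; rfl

lemma act_eq (Z : CentralOps R A ℬ) {X Y : D R} {i j : ℤ} (a : ℬ i) (x : ExtO X Y j) :
    act Z a x = ShiftedHom.comp (x : ShiftedHom X Y j) (Z.zeta Y i a) (by omega) := rfl

lemma act_eq' (Z : CentralOps R A ℬ) {X Y : D R} {dd i : ℤ} (a : ℬ i) (ξ : ExtO X Y dd) :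
    act Z a ξ = ShiftedHom.comp (Z.zeta X i a : ShiftedHom X X i) ξ (by omega) :=
  (Z.central X Y dd i ξ a).symm

end Bridge

/-- Let `A` be a ring of central cohomology operations on `D(R)`,
`φ ∈ A^d` homogeneous and `M`, `N` complexes of `R`-modules.  Writing `ℳ = Ext*_R(M,N)`
and `K(φ;M)` for the mapping cone of `ζ_M(φ) : M → Σ^d M`, there is an exact sequence
of graded `A`-modules `0 → (ℳ/φℳ)(-1) → Ext*_R(K(φ;M),N) → (0 :_ℳ φ)(-d) → 0`.
The sequence is encoded degreewise by a monomorphism `α` from `ℳ(-1)` with kernel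
`φ·ℳ` and an `A`-linear map `β` with image the annihilator of `φ`, exact in the
middle. -/
theorem statement_7 {R : Type u} [Ring R] [HasDerivedCategory.{w} (ModuleCat.{u} R)]
    {A : Type v} [CommRing A] {ℬ : ℤ → AddSubgroup A} [GradedRing ℬ]
    (Z : CentralOps R A ℬ) (d : ℤ) (φ : ℬ d) (M N : Cx R)
    (Kφ : D R) (g : (dQ.obj M)⟦d⟧ ⟶ Kφ) (h : Kφ ⟶ (dQ.obj M)⟦(1 : ℤ)⟧)
    (hT : Triangle.mk (Z.zeta (dQ.obj M) d φ) g h ∈ (distTriang (D R))) :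
    ∃ (α : ∀ j : ℤ, ExtO (dQ.obj M) (dQ.obj N) (j - 1) →+ ExtO Kφ (dQ.obj N) j)
      (β : ∀ j : ℤ, ExtO Kφ (dQ.obj N) j →+ ExtO (dQ.obj M) (dQ.obj N) (j - d)),
      (∀ (i : ℤ) (a : ℬ i) (j : ℤ) (x : ExtO (dQ.obj M) (dQ.obj N) (j - 1)),
        α (i + j) (extCast (by ring) (act Z a x)) = act Z a (α j x)) ∧
      (∀ (i : ℤ) (a : ℬ i) (j : ℤ) (z : ExtO Kφ (dQ.obj N) j),
        β (i + j) (act Z a z) = extCast (by ring) (act Z a (β j z))) ∧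
      (∀ (j : ℤ) (x : ExtO (dQ.obj M) (dQ.obj N) (j - 1)),
        α j x = 0 ↔ ∃ y : ExtO (dQ.obj M) (dQ.obj N) (j - 1 - d),
          x = extCast (by ring) (act Z φ y)) ∧
      (∀ (j : ℤ) (z : ExtO Kφ (dQ.obj N) j), β j z = 0 ↔ ∃ x, z = α j x) ∧
      (∀ (j : ℤ) (x : ExtO (dQ.obj M) (dQ.obj N) (j - d)),
        (∃ z, β j z = x) ↔ act Z φ x = 0) := by
  have hζg : Z.zeta (dQ.obj M) d φ ≫ g = 0 := comp_distTriang_mor_zero₁₂ _ hT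
  have hgh : g ≫ h = 0 := comp_distTriang_mor_zero₂₃ _ hT
  have hhζ : h ≫ (Z.zeta (dQ.obj M) d φ)⟦(1 : ℤ)⟧' = 0 := comp_distTriang_mor_zero₃₁ _ hT
  have hIι : IsIso (show dQ.obj M ⟶ ((dQ.obj M)⟦d⟧)⟦-d⟧ from
      CohSuppAux.iotaSh (D R) d (dQ.obj M)) := by
    dsimp only [CohSuppAux.iotaSh]; infer_instance
  refine ⟨fun j => AddMonoidHom.mk'
      (fun x => ShiftedHom.comp (h : ShiftedHom Kφ (dQ.obj M) (1 : ℤ)) x (by omega))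
      (fun x y => ShiftedHom.comp_add _ x y _),
    fun j => AddMonoidHom.mk'
      (fun z => ShiftedHom.comp (CohSuppAux.iotaSh (D R) d (dQ.obj M))
        ((g ≫ z : ShiftedHom ((dQ.obj M)⟦d⟧) (dQ.obj N) j)) (by omega))
      (fun z₁ z₂ => by rw [Preadditive.comp_add, ShiftedHom.comp_add]),
    ?_, ?_, ?_, ?_, ?_⟩
  · -- A-linearity of α
    intro i a j x
    simp only [AddMonoidHom.mk'_apply]
    rw [act_eq Z a x, extCast_eq_shCast,
      CohSuppAux.comp_shCast (h : ShiftedHom Kφ (dQ.obj M) (1 : ℤ))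
        (ShiftedHom.comp (x : ShiftedHom (dQ.obj M) (dQ.obj N) (j - 1))
          (Z.zeta (dQ.obj N) i a) (by omega))
        (show i + (j - 1) = i + j - 1 by omega) (show i + j - 1 + 1 = i + j by omega)]
    exact (ShiftedHom.comp_assoc (h : ShiftedHom Kφ (dQ.obj M) (1 : ℤ)) x
      (Z.zeta (dQ.obj N) i a) (show (j : ℤ) - 1 + 1 = j by omega) rfl
      (show i + (j - 1) + 1 = i + j by omega)).symm
  · -- A-linearity of β
    intro i a j z
    simp only [AddMonoidHom.mk'_apply]
    rw [act_eq Z a z,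
      ← CohSuppAux.hom_comp_left g z (Z.zeta (dQ.obj N) i a) (show i + j = i + j from rfl),
      act_eq Z a (ShiftedHom.comp (CohSuppAux.iotaSh (D R) d (dQ.obj M))
        ((g ≫ z : ShiftedHom ((dQ.obj M)⟦d⟧) (dQ.obj N) j)) (by omega)),
      extCast_eq_shCast,
      CohSuppAux.shCast_comp
        (ShiftedHom.comp (CohSuppAux.iotaSh (D R) d (dQ.obj M))
          ((g ≫ z : ShiftedHom ((dQ.obj M)⟦d⟧) (dQ.obj N) j)) (show j + -d = j - d by omega))
        (Z.zeta (dQ.obj N) i a) (by omega) (show i + (j - d) = i + j - d by omega)]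
    exact (ShiftedHom.comp_assoc (CohSuppAux.iotaSh (D R) d (dQ.obj M))
      ((g ≫ z : ShiftedHom ((dQ.obj M)⟦d⟧) (dQ.obj N) j))
      (Z.zeta (dQ.obj N) i a) (show j + -d = j - d by omega) rfl
      (show i + j + -d = i + j - d by omega)).symm
  · -- kernel of α
    intro j x
    simp only [AddMonoidHom.mk'_apply]
    constructor
    · intro hx
      obtain ⟨w, hw⟩ := Triangle.yoneda_exact₃
        (Triangle.mk (Z.zeta (dQ.obj M) d φ) g h).rotate (rot_of_distTriang _ hT)
        ((CohSuppAux.upsSh 1 (dQ.obj M)).comp x (show j - 1 + 1 = j by omega))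
        (by show h ≫ _ = 0
            rw [CohSuppAux.hom_comp_upsSh]
            exact hx)
      have hw' : (CohSuppAux.upsSh 1 (dQ.obj M)).comp x (show j - 1 + 1 = j by omega)
          = -((Z.zeta (dQ.obj M) d φ)⟦(1 : ℤ)⟧' ≫ w) := by
        rw [hw]
        show (-((Z.zeta (dQ.obj M) d φ)⟦(1 : ℤ)⟧')) ≫ w = _
        exact Preadditive.neg_comp _ _
      set w' : ShiftedHom ((dQ.obj M)⟦d⟧) (dQ.obj N) (j - 1) :=
        (CohSuppAux.iotaSh (D R) 1 ((dQ.obj M)⟦d⟧)).comp w (show j + -1 = j - 1 by omega)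
        with hw'def
      have hrec : (CohSuppAux.upsSh 1 ((dQ.obj M)⟦d⟧)).comp w' (show j - 1 + 1 = j by omega)
          = w := by
        rw [hw'def, CohSuppAux.comp_iotaSh_comp (CohSuppAux.upsSh 1 ((dQ.obj M)⟦d⟧)) w
          (show j + -1 = j - 1 by omega) (show j - 1 + 1 = j by omega) rfl,
          CohSuppAux.shCast_rfl]
        show 𝟙 _ ≫ w = w
        rw [Category.id_comp]
      have hx2 : x = Z.zeta (dQ.obj M) d φ ≫ (-w') := by
        have hinj := CohSuppAux.comp_left_injective (C := D R) (Z := dQ.obj N)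
          (CohSuppAux.upsSh 1 (dQ.obj M))
          (by dsimp only [CohSuppAux.upsSh]; infer_instance)
          (show j - 1 + 1 = j by omega)
        apply hinj
        show (CohSuppAux.upsSh 1 (dQ.obj M)).comp x (show j - 1 + 1 = j by omega)
          = (CohSuppAux.upsSh 1 (dQ.obj M)).comp (Z.zeta (dQ.obj M) d φ ≫ (-w'))
              (show j - 1 + 1 = j by omega)
        rw [hw', ← hrec, CohSuppAux.map_comp_upsSh, Preadditive.comp_neg,
          ShiftedHom.comp_neg]
      refine ⟨(CohSuppAux.iotaSh (D R) d (dQ.obj M)).comp (-w')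
        (show j - 1 + -d = j - 1 - d by omega), ?_⟩
      rw [act_eq' Z φ, extCast_eq_shCast,
        CohSuppAux.shCast_comp (Z.zeta (dQ.obj M) d φ :
            ShiftedHom (dQ.obj M) (dQ.obj M) d)
          ((CohSuppAux.iotaSh (D R) d (dQ.obj M)).comp (-w')
            (show j - 1 + -d = j - 1 - d by omega))
          (by omega) (show d + (j - 1 - d) = j - 1 by omega),
        CohSuppAux.comp_iotaSh_comp (Z.zeta (dQ.obj M) d φ :
            ShiftedHom (dQ.obj M) (dQ.obj M) d) (-w')
          (show j - 1 + -d = j - 1 - d by omega) (show j - 1 - d + d = j - 1 by omega) rfl,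
        CohSuppAux.shCast_rfl, Preadditive.comp_neg]
      rw [Preadditive.comp_neg] at hx2
      exact hx2
    · rintro ⟨y, hy⟩
      rw [act_eq' Z φ, extCast_eq_shCast,
        CohSuppAux.shCast_comp (Z.zeta (dQ.obj M) d φ :
            ShiftedHom (dQ.obj M) (dQ.obj M) d) y
          (by omega) (show d + (j - 1 - d) = j - 1 by omega)] at hy
      rw [hy]
      have hz : ShiftedHom.comp (h : ShiftedHom Kφ (dQ.obj M) (1 : ℤ))
          (Z.zeta (dQ.obj M) d φ : ShiftedHom (dQ.obj M) (dQ.obj M) d)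
          (show d + 1 = d + 1 from rfl) = 0 := by
        unfold ShiftedHom.comp
        rw [← Category.assoc, hhζ, Limits.zero_comp]
      calc ShiftedHom.comp (h : ShiftedHom Kφ (dQ.obj M) (1 : ℤ))
            (ShiftedHom.comp (Z.zeta (dQ.obj M) d φ :
              ShiftedHom (dQ.obj M) (dQ.obj M) d) y
              (show j - 1 - d + d = j - 1 by omega)) (show j - 1 + 1 = j by omega)
          = (ShiftedHom.comp (h : ShiftedHom Kφ (dQ.obj M) (1 : ℤ))
              (Z.zeta (dQ.obj M) d φ : ShiftedHom (dQ.obj M) (dQ.obj M) d)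
              (show d + 1 = d + 1 from rfl)).comp y
              (show j - 1 - d + (d + 1) = j by omega) :=
            (ShiftedHom.comp_assoc (h : ShiftedHom Kφ (dQ.obj M) (1 : ℤ))
              (Z.zeta (dQ.obj M) d φ : ShiftedHom (dQ.obj M) (dQ.obj M) d) y
              rfl (show j - 1 - d + d = j - 1 by omega)
              (show j - 1 - d + d + 1 = j by omega)).symm
        _ = 0 := by rw [hz, ShiftedHom.zero_comp]
  · -- kernel of β = image of α
    intro j z
    simp only [AddMonoidHom.mk'_apply]
    have hchar : ShiftedHom.comp (CohSuppAux.iotaSh (D R) d (dQ.obj M))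
        ((g ≫ z : ShiftedHom ((dQ.obj M)⟦d⟧) (dQ.obj N) j)) (show j + -d = j - d by omega) = 0
        ↔ g ≫ z = 0 := by
      constructor
      · intro h0
        have hinj := CohSuppAux.comp_left_injective (C := D R) (Z := dQ.obj N)
          (CohSuppAux.iotaSh (D R) d (dQ.obj M)) hIι (show j + -d = j - d by omega)
        apply hinj
        show _ = ShiftedHom.comp _ (0 : ShiftedHom ((dQ.obj M)⟦d⟧) (dQ.obj N) j) _
        rw [ShiftedHom.comp_zero]
        exact h0
      · intro h0
        have h0' : (g ≫ z : ShiftedHom ((dQ.obj M)⟦d⟧) (dQ.obj N) j) = 0 := h0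
        rw [h0', ShiftedHom.comp_zero]
    constructor
    · intro h0
      obtain ⟨w, hw⟩ := Triangle.yoneda_exact₃ _ hT z (hchar.mp h0)
      refine ⟨(CohSuppAux.iotaSh (D R) 1 (dQ.obj M)).comp w (show j + -1 = j - 1 by omega), ?_⟩
      rw [CohSuppAux.comp_iotaSh_comp (h : ShiftedHom Kφ (dQ.obj M) (1 : ℤ)) w
        (show j + -1 = j - 1 by omega) (show j - 1 + 1 = j by omega) rfl,
        CohSuppAux.shCast_rfl]
      exact hw
    · rintro ⟨x, rfl⟩
      apply hchar.mpr
      show g ≫ ShiftedHom.comp (h : ShiftedHom Kφ (dQ.obj M) (1 : ℤ)) x (by omega) = 0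
      unfold ShiftedHom.comp
      rw [reassoc_of% hgh, Limits.zero_comp]
  · -- image of β = annihilator of φ
    intro j x
    constructor
    · rintro ⟨z, rfl⟩
      simp only [AddMonoidHom.mk'_apply]
      rw [act_eq' Z φ,
        CohSuppAux.comp_iotaSh_comp (Z.zeta (dQ.obj M) d φ :
            ShiftedHom (dQ.obj M) (dQ.obj M) d)
          ((g ≫ z : ShiftedHom ((dQ.obj M)⟦d⟧) (dQ.obj N) j))
          (show j + -d = j - d by omega) (by omega) (show j = d + (j - d) by omega)]
      have hz0 : Z.zeta (dQ.obj M) d φ ≫ g ≫ z = 0 := by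
        rw [reassoc_of% hζg, Limits.zero_comp]
      rw [hz0, CohSuppAux.shCast_zero]
    · intro h0
      rw [act_eq' Z φ x] at h0
      have h1 : ShiftedHom.comp (Z.zeta (dQ.obj M) d φ :
          ShiftedHom (dQ.obj M) (dQ.obj M) d) x (show j - d + d = j by omega) = 0 := by
        rw [← CohSuppAux.shCast_eq_zero_iff (show j = d + (j - d) by omega),
          CohSuppAux.shCast_comp (Z.zeta (dQ.obj M) d φ :
              ShiftedHom (dQ.obj M) (dQ.obj M) d) x
            (show j - d + d = j by omega) (show j = d + (j - d) by omega)]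
        exact h0
      have h2 : Z.zeta (dQ.obj M) d φ ≫
          ((CohSuppAux.upsSh d (dQ.obj M)).comp x (show j - d + d = j by omega)) = 0 := by
        rw [CohSuppAux.hom_comp_upsSh]
        exact h1
      obtain ⟨z, hz⟩ := Triangle.yoneda_exact₂ _ hT
        ((CohSuppAux.upsSh d (dQ.obj M)).comp x (show j - d + d = j by omega)) h2
      have hz' : (CohSuppAux.upsSh d (dQ.obj M)).comp x (show j - d + d = j by omega)
          = (g ≫ z : ShiftedHom ((dQ.obj M)⟦d⟧) (dQ.obj N) j) := hz
      refine ⟨z, ?_⟩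
      simp only [AddMonoidHom.mk'_apply]
      rw [← hz']
      calc ShiftedHom.comp (CohSuppAux.iotaSh (D R) d (dQ.obj M))
            ((CohSuppAux.upsSh d (dQ.obj M)).comp x (show j - d + d = j by omega))
            (show j + -d = j - d by omega)
          = (ShiftedHom.comp (CohSuppAux.iotaSh (D R) d (dQ.obj M))
              (CohSuppAux.upsSh d (dQ.obj M)) (add_neg_cancel d)).comp x
              (show j - d + 0 = j - d by omega) :=
            (ShiftedHom.comp_assoc (CohSuppAux.iotaSh (D R) d (dQ.obj M))
              (CohSuppAux.upsSh d (dQ.obj M)) x (add_neg_cancel d)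
              (show j - d + d = j by omega) (show j - d + d + -d = j - d by omega)).symm
        _ = (ShiftedHom.mk₀ 0 rfl (𝟙 (dQ.obj M))).comp x (show j - d + 0 = j - d by omega) := by
            rw [CohSuppAux.iotaSh_comp_upsSh]
        _ = x := ShiftedHom.mk₀_id_comp 0 rfl x


end CohSupp
end

section
/- Let R be an associative ring, 𝒜 a ring of central cohomology operations on D(R), and M, N complexes of R-modules. If the graded 𝒜-module Ext*_R(M,N) is eventually zero, then Supp*_𝒜(M,N) = ∅. Conversely, if Ext*_R(M,N) is eventually noetherian over 𝒜 and Supp*_𝒜(M,N) = ∅, then Ext*_R(M,N) is eventually zero. -/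
/-! Core framework: complexes of modules, semiprojective complexes, hard truncations,
syzygy complexes, the derived category, Ext groups, central cohomology operations,
graded supports and thick subcategories.

Conventions: we use cochain complexes indexed by `ℤ`; the homological degree `i`
of the paper corresponds to the cochain degree `-i`, so that the homological
shift `Σ^d` is the categorical shift `⟦d⟧` and the homological hard truncation
`P_{⩾ n}` is the cochain hard truncation in degrees `⩽ -n`. -/

open CategoryTheory Limits Pretriangulated

universe w v u

namespace CohSupp

open DirectSum

section Layer1

variable {R : Type u} [Ring R] [HasDerivedCategory.{w} (ModuleCat.{u} R)]
variable {A : Type v} [CommRing A] {ℬ : ℤ → AddSubgroup A} [GradedRing ℬ]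

lemma extCast_zero {X Y : D R} {i j : ℤ} (h : i = j) :
    extCast h (0 : ExtO X Y i) = 0 := by subst h; rfl

lemma extCast_eq_zero_iff {X Y : D R} {i j : ℤ} (h : i = j) (x : ExtO X Y i) :
    extCast h x = 0 ↔ x = 0 := by subst h; exact Iff.rfl

lemma extCast_add {X Y : D R} {i j : ℤ} (h : i = j) (x y : ExtO X Y i) :
    extCast h (x + y) = extCast h x + extCast h y := by subst h; rfl

lemma extCast_extCast {X Y : D R} {i j k : ℤ} (h : i = j) (h' : j = k) (x : ExtO X Y i) :
    extCast h' (extCast h x) = extCast (h.trans h') x := by subst h h'; rfl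

variable (Z : CentralOps R A ℬ)

lemma act_def {X Y : D R} {i j : ℤ} (a : ℬ i) (x : ExtO X Y j) :
    act Z a x = ShiftedHom.comp (C := D R) x (Z.zeta Y i a) (by omega) := rfl

lemma comp_cast {X Y W : D R} {a b c c' : ℤ} (f : ExtO X Y a) (g : ExtO Y W b)
    (h : b + a = c) (e : c = c') :
    extCast e (ShiftedHom.comp (C := D R) f g h) =
      ShiftedHom.comp (C := D R) f g (by omega) := by subst e; rfl

lemma zeta_zero (X : D R) (i : ℤ) : Z.zeta X i 0 = 0 := by
  have := Z.zeta_add X i 0 0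
  simpa using this.symm

lemma act_add_right {X Y : D R} {i j : ℤ} (a : ℬ i) (x y : ExtO X Y j) :
    act Z a (x + y) = act Z a x + act Z a y :=
  ShiftedHom.add_comp x y (Z.zeta Y i a) (by omega)

lemma act_zero_right {X Y : D R} {i j : ℤ} (a : ℬ i) :
    act Z a (0 : ExtO X Y j) = 0 :=
  ShiftedHom.zero_comp X j (Z.zeta Y i a) (by omega)

lemma act_add_left {X Y : D R} {i j : ℤ} (a b : ℬ i) (x : ExtO X Y j) :
    act Z (a + b) x = act Z a x + act Z b x := by
  rw [act_def, Z.zeta_add]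
  exact ShiftedHom.comp_add x (Z.zeta Y i a) (Z.zeta Y i b) (by omega)

lemma act_zero_left {X Y : D R} {i j : ℤ} (x : ExtO X Y j) :
    act Z (0 : ℬ i) x = 0 := by
  rw [act_def, zeta_zero]
  exact ShiftedHom.comp_zero Y x (by omega)

lemma act_val_zero {X Y : D R} {i j : ℤ} (a : ℬ i) (ha : (a : A) = 0) (x : ExtO X Y j) :
    act Z a x = 0 := by
  have : a = 0 := Subtype.ext ha
  rw [this, act_zero_left]

/-- `act` as an additive monoid hom in the module variable. -/
noncomputable def actR {X Y : D R} {i : ℤ} (a : ℬ i) (j : ℤ) :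
    ExtO X Y j →+ ExtO X Y (i + j) :=
  AddMonoidHom.mk' (act Z a) (act_add_right Z a)

/-- `act` as an additive monoid hom in the ring variable. -/
noncomputable def actL {X Y : D R} {j : ℤ} (x : ExtO X Y j) (i : ℤ) :
    ℬ i →+ ExtO X Y (i + j) :=
  AddMonoidHom.mk' (fun a => act Z a x) (fun a b => act_add_left Z a b x)

lemma act_act {X Y : D R} {i₁ i₂ j : ℤ} (a : ℬ i₁) (b : ℬ i₂) (x : ExtO X Y j) :
    act Z a (act Z b x) =
      extCast (show (i₂ + i₁) + j = i₁ + (i₂ + j) by omega)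
        (act Z (⟨(b : A) * (a : A), SetLike.mul_mem_graded b.2 a.2⟩ : ℬ (i₂ + i₁)) x) := by
  have e2 : Z.zeta Y (i₂ + i₁) ⟨(b : A) * (a : A), SetLike.mul_mem_graded b.2 a.2⟩ =
      ShiftedHom.comp (C := D R) (Z.zeta Y i₂ b) (Z.zeta Y i₁ a)
        (show i₁ + i₂ = i₂ + i₁ by omega) :=
    Z.zeta_mul Y i₂ i₁ b a
  have e1 := ShiftedHom.comp_assoc x (Z.zeta Y i₂ b) (Z.zeta Y i₁ a)
    (rfl : i₂ + j = i₂ + j) (show i₁ + i₂ = i₂ + i₁ by omega)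
    (show i₁ + i₂ + j = i₁ + (i₂ + j) by omega)
  refine e1.trans ?_
  rw [← e2]
  exact (comp_cast x _ _ _).symm

end Layer1

end CohSupp
namespace CohSupp

open DirectSum

section Layer2

variable {R : Type u} [Ring R] [HasDerivedCategory.{w} (ModuleCat.{u} R)]
variable {A : Type v} [CommRing A] {ℬ : ℤ → AddSubgroup A} [GradedRing ℬ]

lemma homog_degree_unique {s : A} {i i' : ℤ} (h : s ∈ ℬ i) (h' : s ∈ ℬ i')
    (hne : i ≠ i') : s = 0 := by
  have h1 := DirectSum.decompose_of_mem_same ℬ h'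
  rw [DirectSum.decompose_of_mem_ne ℬ h hne] at h1
  exact h1.symm

lemma dec_mul_right {t : A} {d : ℤ} (ht : t ∈ ℬ d) (c : A) (i : ℤ) :
    (DirectSum.decompose ℬ (c * t) i : A) =
      (DirectSum.decompose ℬ c (i - d) : A) * t := by
  have h2 : i - d + d = i := sub_add_cancel i d
  conv_lhs => rw [← h2]
  exact DirectSum.coe_decompose_mul_add_of_right_mem ℬ ht

variable (Z : CentralOps R A ℬ)

lemma act_eq_zero_congr {X Y : D R} {j : ℤ} (x : ExtO X Y j) {i i' : ℤ} {s : A}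
    (hs : s ∈ ℬ i) (hs' : s ∈ ℬ i') (h0 : act Z ⟨s, hs⟩ x = 0) :
    act Z ⟨s, hs'⟩ x = 0 := by
  by_cases h : i = i'
  · subst h; exact h0
  · exact act_val_zero Z _ (homog_degree_unique hs hs' h) x

/-- `u` is homogeneous and annihilates `y`. -/
def Kll {X Y : D R} {j : ℤ} (y : ExtO X Y j) (u : A) : Prop :=
  ∃ (i : ℤ) (hu : u ∈ ℬ i), act Z ⟨u, hu⟩ y = 0

lemma Kll.act_eq_zero {X Y : D R} {j : ℤ} {y : ExtO X Y j} {u : A}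
    (h : Kll Z y u) {i : ℤ} (hu : u ∈ ℬ i) : act Z ⟨u, hu⟩ y = 0 := by
  obtain ⟨i', hu', h0⟩ := h
  exact act_eq_zero_congr Z y hu' hu h0

lemma kll_zero {X Y : D R} {j : ℤ} (y : ExtO X Y j) : Kll Z y 0 :=
  ⟨0, zero_mem _, act_val_zero Z _ rfl y⟩

lemma kll_add {X Y : D R} {j : ℤ} {y : ExtO X Y j} {u v : A} {i : ℤ}
    (hu : u ∈ ℬ i) (hv : v ∈ ℬ i) (h1 : Kll Z y u) (h2 : Kll Z y v) :
    Kll Z y (u + v) := by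
  refine ⟨i, add_mem hu hv, ?_⟩
  have : (⟨u + v, add_mem hu hv⟩ : ℬ i) = ⟨u, hu⟩ + ⟨v, hv⟩ := rfl
  rw [this, act_add_left, h1.act_eq_zero Z hu, h2.act_eq_zero Z hv, add_zero]

lemma kll_mul_left {X Y : D R} {j : ℤ} {y : ExtO X Y j} {v : A} (r : A) {k : ℤ}
    (hr : r ∈ ℬ k) (h : Kll Z y v) : Kll Z y (r * v) := by
  obtain ⟨d, hv, h0⟩ := h
  refine ⟨d + k, by rw [mul_comm]; exact SetLike.mul_mem_graded hv hr, ?_⟩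
  have h1 := act_act Z (⟨r, hr⟩ : ℬ k) (⟨v, hv⟩ : ℬ d) y
  rw [h0, act_zero_right] at h1
  have h2 := (extCast_eq_zero_iff _ _).mp h1.symm
  have h3 : v * r = r * v := mul_comm v r
  exact act_eq_zero_congr Z y (by rw [← h3]; exact SetLike.mul_mem_graded hv hr) _
    (by
      have : act Z (⟨v * r, SetLike.mul_mem_graded hv hr⟩ : ℬ (d + k)) y = 0 := h2
      rw [show (⟨r * v, _⟩ : ℬ (d + k)) = ⟨v * r, SetLike.mul_mem_graded hv hr⟩ from
        Subtype.ext h3.symm]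
      exact this)

/-- The homogeneous annihilator ideal of `y`. -/
def ann {X Y : D R} {j : ℤ} (y : ExtO X Y j) : Ideal A := Ideal.span {u | Kll Z y u}

lemma ann_homog {X Y : D R} {j : ℤ} (y : ExtO X Y j) : (ann Z y).IsHomogeneous ℬ :=
  Ideal.homogeneous_span ℬ _ (fun u hu => by obtain ⟨i, hi, -⟩ := hu; exact ⟨i, hi⟩)

lemma span_kill {X Y : D R} {j : ℤ} {y : ExtO X Y j} {S : Set A}
    (hS : ∀ t ∈ S, Kll Z y t) {s : A} (hs : s ∈ Ideal.span S) {i : ℤ}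
    (hi : s ∈ ℬ i) : act Z ⟨s, hi⟩ y = 0 := by
  obtain ⟨c, hcs, hsum⟩ := Submodule.mem_span_set.mp hs
  classical
  let Φ : A →+ ExtO X Y (i + j) :=
    { toFun := fun u => act Z ((DirectSum.decompose ℬ u) i) y
      map_zero' := by
        show act Z ((DirectSum.decompose ℬ (0 : A)) i) y = 0
        rw [DirectSum.decompose_zero]
        show act Z ((0 : ⨁ i, ℬ i) i) y = 0
        rw [DirectSum.zero_apply, act_zero_left]
      map_add' := fun u v => by
        show act Z ((DirectSum.decompose ℬ (u + v)) i) y = _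
        rw [DirectSum.decompose_add]
        show act Z (((DirectSum.decompose ℬ u) + (DirectSum.decompose ℬ v)) i) y = _
        rw [DirectSum.add_apply, act_add_left] }
  have hΦ : ∀ (u : A) (hu : u ∈ ℬ i), Φ u = act Z ⟨u, hu⟩ y := by
    intro u hu
    have e : (DirectSum.decompose ℬ u) i = ⟨u, hu⟩ :=
      Subtype.ext (DirectSum.decompose_of_mem_same ℬ hu)
    show act Z ((DirectSum.decompose ℬ u) i) y = act Z ⟨u, hu⟩ y
    rw [e]
  rw [← hΦ s hi, ← hsum, map_finsuppSum, Finsupp.sum]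
  refine Finset.sum_eq_zero ?_
  intro t hts
  have htS : t ∈ S := hcs hts
  obtain ⟨d, htd, -⟩ := hS t htS
  have hk : Kll Z y ((DirectSum.decompose ℬ (c t * t) i : ℬ i) : A) := by
    rw [dec_mul_right htd]
    exact kll_mul_left Z _ (SetLike.coe_mem _) (hS t htS)
  show act Z ((DirectSum.decompose ℬ (c t • t)) i) y = 0
  rw [smul_eq_mul]
  exact hk.act_eq_zero Z (SetLike.coe_mem _)

lemma ann_kill {X Y : D R} {j : ℤ} {y : ExtO X Y j} {s : A} (hs : s ∈ ann Z y)
    {i : ℤ} (hi : s ∈ ℬ i) : act Z ⟨s, hi⟩ y = 0 :=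
  span_kill Z (fun _ ht => ht) hs hi

lemma kll_mem_ann {X Y : D R} {j : ℤ} {y : ExtO X Y j} {u : A} (h : Kll Z y u) :
    u ∈ ann Z y := Ideal.subset_span h

end Layer2

end CohSupp
namespace CohSupp

open DirectSum

section Layer3

variable {R : Type u} [Ring R] [HasDerivedCategory.{w} (ModuleCat.{u} R)]
variable {A : Type v} [CommRing A] {ℬ : ℤ → AddSubgroup A} [GradedRing ℬ]
variable (Z : CentralOps R A ℬ)

lemma act_extCast {X Y : D R} {i j j' : ℤ} (a : ℬ i) (h : j = j') (x : ExtO X Y j) :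
    act Z a (extCast h x) = extCast (by rw [h]) (act Z a x) := by subst h; rfl

lemma act_neg_right {X Y : D R} {i j : ℤ} (a : ℬ i) (x : ExtO X Y j) :
    act Z a (-x) = -act Z a x := map_neg (actR Z a j) x

lemma act_neg_left {X Y : D R} {i j : ℤ} (a : ℬ i) (x : ExtO X Y j) :
    act Z (-a) x = -act Z a x := map_neg (actL Z x i) a

lemma act_sub_left {X Y : D R} {i j : ℤ} (a b : ℬ i) (x : ExtO X Y j) :
    act Z (a - b) x = act Z a x - act Z b x := map_sub (actL Z x i) a b

variable {X Y : D R}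

/-- Generators for the graded submodule generated by a finite list of
homogeneous elements. -/
def lgen (L : List (Σ d : ℤ, ExtO X Y d)) (c : ℤ) : Set (ExtO X Y c) :=
  {w | ∃ g ∈ L, (∃ h : g.1 = c, w = extCast h g.2) ∨
    ∃ (i : ℤ) (a : ℬ i) (h : i + g.1 = c), w = extCast h (act Z a g.2)}

/-- The graded submodule generated by a finite list of homogeneous elements. -/
noncomputable def listSpan (L : List (Σ d : ℤ, ExtO X Y d)) : ExtSub Z X Y where
  carrier c := AddSubgroup.closure (lgen Z L c)
  act_mem := by
    intro i c a x hx
    induction hx using AddSubgroup.closure_induction with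
    | mem w hw =>
      apply AddSubgroup.subset_closure
      obtain ⟨g, hg, hw⟩ := hw
      refine ⟨g, hg, Or.inr ?_⟩
      rcases hw with ⟨h, rfl⟩ | ⟨i', b, h, rfl⟩
      · exact ⟨i, a, by omega, by rw [act_extCast]⟩
      · refine ⟨i' + i, ⟨(b : A) * (a : A), SetLike.mul_mem_graded b.2 a.2⟩, by omega, ?_⟩
        rw [act_extCast, act_act, extCast_extCast]
    | zero => rw [act_zero_right]; exact zero_mem _
    | add x y _ _ hx hy => rw [act_add_right]; exact add_mem hx hy
    | neg x _ hx => rw [act_neg_right]; exact neg_mem hx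

lemma listSpan_carrier_bot {j₁ : ℤ} (L : List (Σ d : ℤ, ExtO X Y d))
    (hL : ∀ g ∈ L, j₁ ≤ g.1) {c : ℤ} (hc : c < j₁) :
    (listSpan Z L).carrier c = ⊥ := by
  refine le_bot_iff.mp ?_
  refine (AddSubgroup.closure_le _).mpr ?_
  rintro w ⟨g, hg, hw⟩
  have hgd := hL g hg
  rcases hw with ⟨h, rfl⟩ | ⟨i, a, h, rfl⟩
  · omega
  · have hi : i < 0 := by omega
    have ha : (a : A) = 0 := by
      have hle : ℬ i ≤ ⊥ := le_of_eq (Z.nonneg i hi)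
      exact AddSubgroup.mem_bot.mp (hle a.2)
    rw [act_val_zero Z a ha, extCast_zero]
    exact AddSubgroup.mem_bot.mpr rfl

lemma listSpan_mono {L L' : List (Σ d : ℤ, ExtO X Y d)}
    (h : ∀ g ∈ L, g ∈ L') (c : ℤ) :
    (listSpan Z L).carrier c ≤ (listSpan Z L').carrier c := by
  apply AddSubgroup.closure_mono
  rintro w ⟨g, hg, hw⟩
  exact ⟨g, h g hg, hw⟩

lemma listSpan_self_mem {L : List (Σ d : ℤ, ExtO X Y d)} {g : Σ d : ℤ, ExtO X Y d}
    (hg : g ∈ L) : g.2 ∈ (listSpan Z L).carrier g.1 :=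
  AddSubgroup.subset_closure ⟨g, hg, Or.inl ⟨rfl, rfl⟩⟩

/-- Every high-degree part of `Ext` is generated by finitely many homogeneous
elements, by noetherianity. -/
lemma exists_fin_gens {j₀ : ℤ} (h : NoethFrom Z X Y j₀) :
    ∃ L : List (Σ d : ℤ, ExtO X Y d), (∀ g ∈ L, j₀ ≤ g.1) ∧
      ∀ c : ℤ, j₀ ≤ c → ∀ w : ExtO X Y c, w ∈ (listSpan Z L).carrier c := by
  by_contra hno
  push_neg at hno
  classical
  let T := {L : List (Σ d : ℤ, ExtO X Y d) // ∀ g ∈ L, j₀ ≤ g.1}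
  have step : ∀ L : T, ∃ L' : T, (∀ g ∈ L.1, g ∈ L'.1) ∧
      ∃ (c : ℤ) (w : ExtO X Y c), w ∈ (listSpan Z L'.1).carrier c ∧
        w ∉ (listSpan Z L.1).carrier c := by
    intro L
    obtain ⟨c, hc, w, hw⟩ := hno L.1 L.2
    refine ⟨⟨L.1 ++ [⟨c, w⟩], ?_⟩, ?_, c, w, ?_, hw⟩
    · intro g hg
      rcases List.mem_append.mp hg with hg | hg
      · exact L.2 g hg
      · simp at hg; subst hg; exact hc
    · intro g hg; exact List.mem_append.mpr (Or.inl hg)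
    · exact listSpan_self_mem Z (g := ⟨c, w⟩) (List.mem_append.mpr (Or.inr (by simp)))
  let seq : ℕ → T := fun n => Nat.rec ⟨[], by simp⟩ (fun _ Ln => (step Ln).choose) n
  have hseq : ∀ n, seq (n + 1) = (step (seq n)).choose := fun n => rfl
  let f : ℕ → ExtSub Z X Y := fun n => listSpan Z (seq n).1
  obtain ⟨n₀, hst⟩ := h f
    (fun n c hc => listSpan_carrier_bot Z _ (seq n).2 hc)
    (fun n c => listSpan_mono Z (step (seq n)).choose_spec.1 c)
  obtain ⟨hsub, c, w, hw1, hw2⟩ := (step (seq n₀)).choose_spec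
  have hw1' : w ∈ (f (n₀ + 1)).carrier c := hw1
  rw [hst (n₀ + 1) (by omega) c] at hw1'
  exact hw2 hw1' 

/-- Generators for `J · x`. -/
def igen (J : Ideal A) {dx : ℤ} (x : ExtO X Y dx) (c : ℤ) : Set (ExtO X Y c) :=
  {w | ∃ (i : ℤ) (a : ℬ i), (a : A) ∈ J ∧ ∃ h : i + dx = c, w = extCast h (act Z a x)}

/-- The graded submodule `J · x`. -/
noncomputable def idealSpan (J : Ideal A) {dx : ℤ} (x : ExtO X Y dx) : ExtSub Z X Y where
  carrier c := AddSubgroup.closure (igen Z J x c)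
  act_mem := by
    intro i c a w hw
    induction hw using AddSubgroup.closure_induction with
    | mem w hw =>
      apply AddSubgroup.subset_closure
      obtain ⟨i', b, hbJ, h, rfl⟩ := hw
      refine ⟨i' + i, ⟨(b : A) * (a : A), SetLike.mul_mem_graded b.2 a.2⟩,
        Ideal.mul_mem_right _ _ hbJ, by omega, ?_⟩
      rw [act_extCast, act_act, extCast_extCast]
    | zero => rw [act_zero_right]; exact zero_mem _
    | add x y _ _ hx hy => rw [act_add_right]; exact add_mem hx hy
    | neg x _ hx => rw [act_neg_right]; exact neg_mem hx

lemma idealSpan_carrier_bot (J : Ideal A) {dx : ℤ} (x : ExtO X Y dx) {j₁ : ℤ}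
    (hdx : j₁ ≤ dx) {c : ℤ} (hc : c < j₁) : (idealSpan Z J x).carrier c = ⊥ := by
  refine le_bot_iff.mp ((AddSubgroup.closure_le _).mpr ?_)
  rintro w ⟨i, a, _, h, rfl⟩
  have ha : (a : A) = 0 := by
    have hle : ℬ i ≤ ⊥ := le_of_eq (Z.nonneg i (by omega))
    exact AddSubgroup.mem_bot.mp (hle a.2)
  rw [act_val_zero Z a ha, extCast_zero]
  exact AddSubgroup.mem_bot.mpr rfl

lemma idealSpan_mono {J J' : Ideal A} (h : J ≤ J') {dx : ℤ} (x : ExtO X Y dx) (c : ℤ) :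
    (idealSpan Z J x).carrier c ≤ (idealSpan Z J' x).carrier c := by
  apply AddSubgroup.closure_mono
  rintro w ⟨i, a, haJ, hh, rfl⟩
  exact ⟨i, a, h haJ, hh, rfl⟩

lemma idealSpan_carrier_shape (J : Ideal A) {dx : ℤ} (x : ExtO X Y dx) (i : ℤ)
    {w : ExtO X Y (i + dx)} (hw : w ∈ (idealSpan Z J x).carrier (i + dx)) :
    ∃ b : ℬ i, (b : A) ∈ J ∧ w = act Z b x := by
  induction hw using AddSubgroup.closure_induction with
  | mem w hw =>
    obtain ⟨i', a, haJ, h, rfl⟩ := hw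
    have : i' = i := by omega
    subst this
    exact ⟨a, haJ, rfl⟩
  | zero => exact ⟨0, Submodule.zero_mem _, (act_zero_left Z _).symm⟩
  | add x y _ _ hx hy =>
    obtain ⟨b1, hb1, rfl⟩ := hx
    obtain ⟨b2, hb2, rfl⟩ := hy
    exact ⟨b1 + b2, add_mem hb1 hb2, (act_add_left Z b1 b2 x).symm⟩
  | neg x _ hx =>
    obtain ⟨b, hb, rfl⟩ := hx
    exact ⟨-b, neg_mem hb, (act_neg_left Z b x).symm⟩

/-- By noetherianity, the positive part of `A` is finitely generated over the
annihilator of any fixed homogeneous element of degree `⩾ j₀`. -/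
lemma aplus_fg {j₀ : ℤ} (h : NoethFrom Z X Y j₀) {dx : ℤ} (hdx : j₀ ≤ dx)
    (x : ExtO X Y dx) :
    ∃ zl : List A, (∀ z ∈ zl, ∃ d : ℤ, 1 ≤ d ∧ z ∈ ℬ d) ∧
      ∀ (e : ℤ), 1 ≤ e → ∀ s ∈ ℬ e, s ∈ ann Z x ⊔ Ideal.span {z | z ∈ zl} := by
  by_contra hno
  push_neg at hno
  classical
  let T := {zl : List A // ∀ z ∈ zl, ∃ d : ℤ, 1 ≤ d ∧ z ∈ ℬ d}
  let J : T → Ideal A := fun zl => ann Z x ⊔ Ideal.span {z | z ∈ zl.1}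
  have step : ∀ zl : T, ∃ zl' : T, J zl ≤ J zl' ∧
      ∃ (e : ℤ) (s : A), 1 ≤ e ∧ s ∈ ℬ e ∧ s ∉ J zl ∧ s ∈ J zl' := by
    intro zl
    obtain ⟨e, he, s, hs, hsJ⟩ := hno zl.1 zl.2
    refine ⟨⟨zl.1 ++ [s], ?_⟩, ?_, e, s, he, hs, hsJ, ?_⟩
    · intro z hz
      rcases List.mem_append.mp hz with hz | hz
      · exact zl.2 z hz
      · simp at hz; subst hz; exact ⟨e, he, hs⟩
    · refine sup_le_sup_left (Ideal.span_mono ?_) _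
      intro z hz; exact List.mem_append.mpr (Or.inl hz)
    · refine Submodule.mem_sup_right (Ideal.subset_span ?_)
      exact List.mem_append.mpr (Or.inr (by simp))
  let seq : ℕ → T := fun n => Nat.rec ⟨[], by simp⟩ (fun _ zn => (step zn).choose) n
  have hseq : ∀ n, seq (n + 1) = (step (seq n)).choose := fun n => rfl
  let f : ℕ → ExtSub Z X Y := fun n => idealSpan Z (J (seq n)) x
  obtain ⟨n₀, hst⟩ := h f
    (fun n c hc => idealSpan_carrier_bot Z _ x hdx hc)
    (fun n c => idealSpan_mono Z (step (seq n)).choose_spec.1 x c)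
  obtain ⟨hle, e, s, he, hs, hsJ, hsJ'⟩ := (step (seq n₀)).choose_spec
  have hsJ'' : s ∈ J (seq (n₀ + 1)) := hsJ'
  have hw : act Z (⟨s, hs⟩ : ℬ e) x ∈ (f (n₀ + 1)).carrier (e + dx) :=
    AddSubgroup.subset_closure ⟨e, ⟨s, hs⟩, hsJ'', rfl, rfl⟩
  rw [hst (n₀ + 1) (by omega) (e + dx)] at hw
  obtain ⟨b, hbJ, hb⟩ := idealSpan_carrier_shape Z (J (seq n₀)) x e hw
  have h0 : act Z ((⟨s, hs⟩ : ℬ e) - b) x = 0 := by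
    rw [act_sub_left, hb, sub_self]
  have hkll : Kll Z x ((⟨s, hs⟩ : ℬ e) - b : ℬ e) := ⟨e, ((⟨s, hs⟩ : ℬ e) - b).2, by
    have : (⟨(((⟨s, hs⟩ : ℬ e) - b : ℬ e) : A), ((⟨s, hs⟩ : ℬ e) - b).2⟩ : ℬ e) =
        ((⟨s, hs⟩ : ℬ e) - b) := rfl
    rw [this]; exact h0⟩
  have hmem : s - (b : A) ∈ ann Z x := kll_mem_ann Z hkll
  have : s ∈ J (seq n₀) := by
    have h1 : s - (b : A) ∈ J (seq n₀) := Submodule.mem_sup_left hmem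
    have h2 : (b : A) ∈ J (seq n₀) := hbJ
    have := Submodule.add_mem _ h1 h2
    simpa using this
  exact hsJ this

end Layer3

end CohSupp
namespace CohSupp

open DirectSum

section Layer4

variable {R : Type u} [Ring R] [HasDerivedCategory.{w} (ModuleCat.{u} R)]
variable {A : Type v} [CommRing A] {ℬ : ℤ → AddSubgroup A} [GradedRing ℬ]

/-- Taking the degree-`i` homogeneous component, as an additive map. -/
noncomputable def decHom (ℬ : ℤ → AddSubgroup A) [GradedRing ℬ] (i : ℤ) : A →+ A where
  toFun u := (DirectSum.decompose ℬ u i : A)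
  map_zero' := by
    show (DirectSum.decompose ℬ (0 : A) i : A) = 0
    rw [DirectSum.decompose_zero]
    show ((0 : ⨁ i, ℬ i) i : A) = 0
    rw [DirectSum.zero_apply]; rfl
  map_add' u v := by
    show (DirectSum.decompose ℬ (u + v) i : A) = (DirectSum.decompose ℬ u i : A) + (DirectSum.decompose ℬ v i : A)
    rw [DirectSum.decompose_add]
    show (((DirectSum.decompose ℬ u) + (DirectSum.decompose ℬ v)) i : A) = _
    rw [DirectSum.add_apply]; rfl

lemma decHom_apply (i : ℤ) (u : A) : decHom ℬ i u = (DirectSum.decompose ℬ u i : A) := rfl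

lemma decHom_mem (i : ℤ) (u : A) : decHom ℬ i u ∈ ℬ i := SetLike.coe_mem _

/-- A homogeneous ideal avoiding `1` which is "homogeneously prime" is prime. -/
lemma isPrime_of_homog_prime (p : Ideal A) (hp : p.IsHomogeneous ℬ) (hone : (1 : A) ∉ p)
    (hpr : ∀ {iu iv : ℤ} {u v : A}, u ∈ ℬ iu → v ∈ ℬ iv → u ∉ p → v ∉ p → u * v ∉ p) :
    p.IsPrime := by
  constructor
  · intro h; exact hone (h ▸ Submodule.mem_top)
  · intro f g hfg
    by_contra hcon
    push_neg at hcon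
    obtain ⟨hf, hg⟩ := hcon
    classical
    have hdf : ∀ i, (DirectSum.decompose ℬ f i : A) ∈ ℬ i := fun i => SetLike.coe_mem _
    have hdg : ∀ k, (DirectSum.decompose ℬ g k : A) ∈ ℬ k := fun k => SetLike.coe_mem _
    set Sf := (DirectSum.decompose ℬ f).support.filter
      (fun i => (DirectSum.decompose ℬ f i : A) ∉ p) with hSf
    set Sg := (DirectSum.decompose ℬ g).support.filter
      (fun k => (DirectSum.decompose ℬ g k : A) ∉ p) with hSg
    have hSfne : Sf.Nonempty := by
      by_contra hemp
      apply hf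
      rw [← DirectSum.sum_support_decompose ℬ f]
      refine Ideal.sum_mem _ (fun i hi => ?_)
      by_contra hip
      exact hemp ⟨i, Finset.mem_filter.mpr ⟨hi, hip⟩⟩
    have hSgne : Sg.Nonempty := by
      by_contra hemp
      apply hg
      rw [← DirectSum.sum_support_decompose ℬ g]
      refine Ideal.sum_mem _ (fun k hk => ?_)
      by_contra hkp
      exact hemp ⟨k, Finset.mem_filter.mpr ⟨hk, hkp⟩⟩
    set i₀ := Sf.max' hSfne with hi₀
    set k₀ := Sg.max' hSgne with hk₀
    have hfi₀ : (DirectSum.decompose ℬ f i₀ : A) ∉ p :=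
      (Finset.mem_filter.mp (Sf.max'_mem hSfne)).2
    have hgk₀ : (DirectSum.decompose ℬ g k₀ : A) ∉ p :=
      (Finset.mem_filter.mp (Sg.max'_mem hSgne)).2
    have hfgt : ∀ i : ℤ, i₀ < i → (DirectSum.decompose ℬ f i : A) ∈ p := by
      intro i hi
      by_contra hip
      by_cases hsup : i ∈ (DirectSum.decompose ℬ f).support
      · exact absurd (Sf.le_max' i (Finset.mem_filter.mpr ⟨hsup, hip⟩)) (by omega)
      · rw [DFinsupp.notMem_support_iff.mp hsup] at hip
        exact hip (by exact Submodule.zero_mem p)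
    have hggt : ∀ k : ℤ, k₀ < k → (DirectSum.decompose ℬ g k : A) ∈ p := by
      intro k hk
      by_contra hkp
      by_cases hsup : k ∈ (DirectSum.decompose ℬ g).support
      · exact absurd (Sg.le_max' k (Finset.mem_filter.mpr ⟨hsup, hkp⟩)) (by omega)
      · rw [DFinsupp.notMem_support_iff.mp hsup] at hkp
        exact hkp (by exact Submodule.zero_mem p)
    -- the components of the product
    set h : ℤ → ℤ → A := fun i k =>
      decHom ℬ (i₀ + k₀) ((DirectSum.decompose ℬ f i : A) * (DirectSum.decompose ℬ g k : A))
      with hh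
    have hterm : ∀ i k : ℤ, (i, k) ≠ (i₀, k₀) → h i k ∈ p := by
      intro i k hne
      by_cases hik : i + k = i₀ + k₀
      · by_cases hi : i₀ < i
        · exact hp _ (Ideal.mul_mem_right _ _ (hfgt i hi))
        · have hkgt : k₀ < k ∨ (i = i₀ ∧ k = k₀) := by
            rcases lt_or_eq_of_le (not_lt.mp hi) with h1 | h1
            · left; omega
            · right; exact ⟨h1, by omega⟩
          rcases hkgt with hkgt | ⟨rfl, rfl⟩
          · exact hp _ (Ideal.mul_mem_left _ _ (hggt k hkgt))
          · exact absurd rfl hne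
      · have : (DirectSum.decompose ℬ f i : A) * (DirectSum.decompose ℬ g k : A) ∈ ℬ (i + k) :=
          SetLike.mul_mem_graded (hdf i) (hdg k)
        rw [hh]
        show (DirectSum.decompose ℬ _ (i₀ + k₀) : A) ∈ p
        rw [DirectSum.decompose_of_mem_ne ℬ this hik]
        exact Submodule.zero_mem p
    have hkey : h i₀ k₀ ∉ p := by
      have hmem : (DirectSum.decompose ℬ f i₀ : A) * (DirectSum.decompose ℬ g k₀ : A) ∈
          ℬ (i₀ + k₀) := SetLike.mul_mem_graded (hdf i₀) (hdg k₀)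
      have : h i₀ k₀ = (DirectSum.decompose ℬ f i₀ : A) * (DirectSum.decompose ℬ g k₀ : A) := by
        rw [hh]
        exact DirectSum.decompose_of_mem_same ℬ hmem
      rw [this]
      exact hpr (hdf i₀) (hdg k₀) hfi₀ hgk₀
    -- expand the product
    have hexp : decHom ℬ (i₀ + k₀) (f * g) =
        ∑ q ∈ (DirectSum.decompose ℬ f).support ×ˢ (DirectSum.decompose ℬ g).support,
          h q.1 q.2 := by
      conv_lhs => rw [← DirectSum.sum_support_decompose ℬ f,
        ← DirectSum.sum_support_decompose ℬ g]
      rw [Finset.sum_mul_sum, map_sum]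
      rw [Finset.sum_product]
      exact Finset.sum_congr rfl (fun i _ => map_sum _ _ _)
    have hi₀mem : i₀ ∈ (DirectSum.decompose ℬ f).support :=
      (Finset.mem_filter.mp (Sf.max'_mem hSfne)).1
    have hk₀mem : k₀ ∈ (DirectSum.decompose ℬ g).support :=
      (Finset.mem_filter.mp (Sg.max'_mem hSgne)).1
    have hpair : (i₀, k₀) ∈ (DirectSum.decompose ℬ f).support ×ˢ
        (DirectSum.decompose ℬ g).support := Finset.mem_product.mpr ⟨hi₀mem, hk₀mem⟩
    have hsplit := Finset.add_sum_erase _ (fun q : ℤ × ℤ => h q.1 q.2) hpair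
    have hrest : ∑ q ∈ ((DirectSum.decompose ℬ f).support ×ˢ
        (DirectSum.decompose ℬ g).support).erase (i₀, k₀), h q.1 q.2 ∈ p :=
      Ideal.sum_mem _ (fun q hq => hterm q.1 q.2 (by
        have := (Finset.mem_erase.mp hq).1
        simpa using this))
    have htot : decHom ℬ (i₀ + k₀) (f * g) ∈ p := hp _ hfg
    rw [hexp, ← hsplit] at htot
    have htot' : h i₀ k₀ + ∑ q ∈ ((DirectSum.decompose ℬ f).support ×ˢ
        (DirectSum.decompose ℬ g).support).erase (i₀, k₀), h q.1 q.2 ∈ p := by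
      simpa using htot
    exact hkey ((Submodule.add_mem_iff_left p hrest).mp htot')

variable (Z : CentralOps R A ℬ) {X Y : D R}

lemma kll_pow_shift {j : ℤ} (y : ExtO X Y j) {d : ℤ} {a : A} (ha : a ∈ ℬ d) (n : ℕ)
    {i : ℤ} {s : A} (hs : s ∈ ℬ i) :
    act Z (⟨s, hs⟩ : ℬ i) (act Z (⟨a ^ n, SetLike.pow_mem_graded n ha⟩ : ℬ (n • d)) y) = 0 ↔
      Kll Z y (a ^ n * s) := by
  rw [act_act Z (⟨s, hs⟩ : ℬ i) (⟨a ^ n, SetLike.pow_mem_graded n ha⟩ : ℬ (n • d)) y,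
    extCast_eq_zero_iff]
  constructor
  · intro h0
    exact ⟨n • d + i, SetLike.mul_mem_graded (SetLike.pow_mem_graded n ha) hs, h0⟩
  · intro h
    exact h.act_eq_zero Z _

lemma kll_pow_mono {j : ℤ} (y : ExtO X Y j) {d : ℤ} {a t : A} (ha : a ∈ ℬ d)
    {n N : ℕ} (hnN : n ≤ N) (h : Kll Z y (a ^ n * t)) : Kll Z y (a ^ N * t) := by
  have he : a ^ N * t = a ^ (N - n) * (a ^ n * t) := by
    rw [← mul_assoc, ← pow_add]
    congr 2
    omega
  rw [he]
  exact kll_mul_left Z _ (SetLike.pow_mem_graded (N - n) ha) h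

/-- **Local nilpotence.** If the support is empty, then every positive-degree
homogeneous element acts nilpotently on every element. -/
lemma loc_nilp (hsupp : supp Z X Y = ∅) {j : ℤ} (y : ExtO X Y j) {d : ℤ} (hd : 1 ≤ d)
    {a : A} (ha : a ∈ ℬ d) :
    ∃ n : ℕ, act Z (⟨a ^ n, SetLike.pow_mem_graded n ha⟩ : ℬ (n • d)) y = 0 := by
  rcases eq_or_ne y 0 with rfl | hy0
  · exact ⟨0, act_zero_right Z _⟩
  by_contra hno
  push_neg at hno
  -- the ideal of homogeneous elements killing some `aⁿ • y`
  set Sinf : Set A := {s : A | (∃ i : ℤ, s ∈ ℬ i) ∧ ∃ n : ℕ, Kll Z y (a ^ n * s)} with hSinf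
  set 𝔍 : Ideal A := Ideal.span Sinf with h𝔍
  have h𝔍hom : 𝔍.IsHomogeneous ℬ :=
    Ideal.homogeneous_span ℬ _ (fun s hs => hs.1)
  -- homogeneous elements of 𝔍 kill some power
  have h𝔍kill : ∀ {s : A} {i : ℤ}, s ∈ 𝔍 → s ∈ ℬ i → ∃ n : ℕ, Kll Z y (a ^ n * s) := by
    intro s i hs𝔍 hsB
    obtain ⟨c, hcs, hsum⟩ := Submodule.mem_span_set.mp hs𝔍
    classical
    -- uniform power
    set N : ℕ := c.support.sup (fun t => if h : t ∈ Sinf then h.2.choose else 0) with hN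
    have hkillN : ∀ t ∈ (c.support : Set A), Kll Z (act Z
        (⟨a ^ N, SetLike.pow_mem_graded N ha⟩ : ℬ (N • d)) y) t := by
      intro t ht
      have htS : t ∈ Sinf := hcs ht
      obtain ⟨it, hit⟩ := htS.1
      have hn := htS.2.choose_spec
      have hle : htS.2.choose ≤ N := by
        rw [hN]
        have hts : t ∈ c.support := ht
        refine le_trans (le_of_eq ?_) (Finset.le_sup hts)
        rw [dif_pos htS]
      have hkN : Kll Z y (a ^ N * t) := kll_pow_mono Z y ha hle hn
      exact ⟨it, hit, (kll_pow_shift Z y ha N hit).mpr hkN⟩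
    have hsp : s ∈ Ideal.span (c.support : Set A) := by
      rw [← hsum]
      refine Submodule.sum_mem _ (fun t ht => ?_)
      exact Ideal.mul_mem_left _ _ (Ideal.subset_span ht)
    have h0 := span_kill Z hkillN hsp hsB
    exact ⟨N, (kll_pow_shift Z y ha N hsB).mp h0⟩
  -- powers of `a` avoid 𝔍
  have hpow𝔍 : ∀ m : ℕ, a ^ m ∉ 𝔍 := by
    intro m hm
    obtain ⟨n, hn⟩ := h𝔍kill hm (SetLike.pow_mem_graded m ha)
    rw [← pow_add] at hn
    exact hno (n + m) (hn.act_eq_zero Z (SetLike.pow_mem_graded (n + m) ha))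
  -- Zorn's lemma
  set 𝒮 : Set (Ideal A) := {K | 𝔍 ≤ K ∧ K.IsHomogeneous ℬ ∧ ∀ m : ℕ, a ^ m ∉ K} with h𝒮
  have h𝔍𝒮 : 𝔍 ∈ 𝒮 := ⟨le_rfl, h𝔍hom, hpow𝔍⟩
  obtain ⟨p, hp𝔍, hpmax⟩ := zorn_le_nonempty₀ 𝒮 (fun c hc𝒮 hchain K hK => by
    refine ⟨sSup c, ⟨?_, ?_, ?_⟩, fun z hz => le_sSup hz⟩
    · exact le_trans (hc𝒮 hK).1 (le_sSup hK)
    · intro i r hr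
      obtain ⟨K', hK', hrK'⟩ := (Submodule.mem_sSup_of_directed ⟨K, hK⟩
        hchain.directedOn).mp hr
      exact le_sSup hK' ((hc𝒮 hK').2.1 i hrK')
    · intro m hm
      obtain ⟨K', hK', hmK'⟩ := (Submodule.mem_sSup_of_directed ⟨K, hK⟩
        hchain.directedOn).mp hm
      exact (hc𝒮 hK').2.2 m hmK') 𝔍 h𝔍𝒮
  obtain ⟨⟨hp𝔍le, hphom, hppow⟩, hpmax'⟩ := hpmax
  have hone : (1 : A) ∉ p := by
    have := hppow 0
    rwa [pow_zero] at this
  -- homogeneous primality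
  have hpr : ∀ {iu iv : ℤ} {u v : A}, u ∈ ℬ iu → v ∈ ℬ iv → u ∉ p → v ∉ p → u * v ∉ p := by
    intro iu iv u v hu hv hup hvp huv
    have hgrow : ∀ {iw : ℤ} {w : A}, w ∈ ℬ iw → w ∉ p →
        ∃ (m : ℕ) (q cw : A), q ∈ p ∧ cw ∈ ℬ ((m • d : ℤ) - iw) ∧ a ^ m = q + cw * w := by
      intro iw w hw hwp
      have hJw : p ⊔ Ideal.span {w} ∉ 𝒮 := by
        intro hmem
        have hle := hpmax' hmem le_sup_left
        exact hwp (hle (Submodule.mem_sup_right (Ideal.subset_span rfl)))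
      have hm : ∃ m : ℕ, a ^ m ∈ p ⊔ Ideal.span {w} := by
        by_contra hcon
        push_neg at hcon
        exact hJw ⟨le_trans hp𝔍le le_sup_left,
          Ideal.IsHomogeneous.sup hphom (Ideal.homogeneous_span ℬ _ (by
            rintro x rfl
            exact ⟨iw, hw⟩)), hcon⟩
      obtain ⟨m, hm⟩ := hm
      obtain ⟨q, hq, w', hw', hqw⟩ := Submodule.mem_sup.mp hm
      obtain ⟨cw, hcw⟩ := Ideal.mem_span_singleton'.mp hw'
      -- take components in degree m • d
      have hdec := congrArg (decHom ℬ (m • d)) hqw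
      rw [map_add] at hdec
      have h1 : decHom ℬ (m • d) (a ^ m) = a ^ m :=
        DirectSum.decompose_of_mem_same ℬ (SetLike.pow_mem_graded m ha)
      have h2 : decHom ℬ (m • d) w' = decHom ℬ ((m • d : ℤ) - iw) cw * w := by
        rw [← hcw, decHom_apply, decHom_apply, dec_mul_right hw]
      refine ⟨m, decHom ℬ (m • d) q, decHom ℬ ((m • d : ℤ) - iw) cw,
        hphom _ hq, decHom_mem _ _, ?_⟩
      rw [← h1, ← hdec, h2]
    obtain ⟨m, q, cu, hq, hcu, hequ⟩ := hgrow hu hup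
    obtain ⟨m', q', cv, hq', hcv, heqv⟩ := hgrow hv hvp
    apply hppow (m + m')
    rw [pow_add, hequ, heqv]
    have expand : (q + cu * u) * (q' + cv * v) =
        q * (q' + cv * v) + (cu * u) * q' + (cu * cv) * (u * v) := by ring
    rw [expand]
    refine Submodule.add_mem _ (Submodule.add_mem _ ?_ ?_) ?_
    · exact Ideal.mul_mem_right _ _ hq
    · exact Ideal.mul_mem_left _ _ hq'
    · exact Ideal.mul_mem_left _ _ huv
  have hprime : p.IsPrime := isPrime_of_homog_prime p hphom hone hpr
  -- p is in the support
  have hsupp_p : p ∈ supp Z X Y := by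
    refine ⟨⟨hprime, hphom, ?_⟩, j, y, hy0, ?_⟩
    · intro hcon
      exact hppow 1 (by simpa using hcon d hd (pow_one a ▸ ha))
    · intro i s hsp
      intro h0
      apply hsp
      apply hp𝔍le
      apply Ideal.subset_span
      refine ⟨⟨i, s.2⟩, 0, ?_⟩
      rw [pow_zero, one_mul]
      exact ⟨i, s.2, by
        have : (⟨(s : A), s.2⟩ : ℬ i) = s := rfl
        rw [this]; exact h0⟩
  rw [hsupp] at hsupp_p
  exact hsupp_p

end Layer4

end CohSupp
namespace CohSupp

open DirectSum

section Layer5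

variable {R : Type u} [Ring R] [HasDerivedCategory.{w} (ModuleCat.{u} R)]
variable {A : Type v} [CommRing A] {ℬ : ℤ → AddSubgroup A} [GradedRing ℬ]
variable (Z : CentralOps R A ℬ) {X Y : D R}

/-- Uniform bound: all homogeneous elements of sufficiently high degree
annihilate a given `x`. -/
lemma elem_bound {j₀ : ℤ} (hN : NoethFrom Z X Y j₀) (hsupp : supp Z X Y = ∅)
    {dx : ℤ} (hdx : j₀ ≤ dx) (x : ExtO X Y dx) :
    ∃ E : ℤ, 1 ≤ E ∧ ∀ e : ℤ, E ≤ e → ∀ (s : A) (hs : s ∈ ℬ e),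
      act Z (⟨s, hs⟩ : ℬ e) x = 0 := by
  classical
  obtain ⟨zl, hzl, hcover⟩ := aplus_fg Z hN hdx x
  set m := zl.length with hm
  rcases Nat.eq_zero_or_pos m with hm0 | hmpos
  · -- no generators: everything positive already annihilates
    refine ⟨1, le_rfl, fun e he s hs => ?_⟩
    have h1 := hcover e he s hs
    have hemp : {z : A | z ∈ zl} = (∅ : Set A) := by
      have : zl = [] := List.length_eq_zero_iff.mp hm0
      simp [this]
    rw [hemp, Ideal.span_empty, sup_bot_eq] at h1
    exact ann_kill Z h1 hs
  -- index the generators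
  set z : Fin m → A := fun t => zl.get t with hz
  have hrange : {z' : A | z' ∈ zl} = Set.range z := by
    ext a
    simp only [Set.mem_setOf_eq, Set.mem_range]
    rw [List.mem_iff_get]
  have hzmem : ∀ t : Fin m, z t ∈ zl := fun t => List.get_mem zl t
  -- degrees
  have hdeg : ∀ t : Fin m, ∃ d : ℤ, 1 ≤ d ∧ z t ∈ ℬ d := fun t => hzl (z t) (hzmem t)
  set dt : Fin m → ℤ := fun t => (hdeg t).choose with hdt
  have hdt1 : ∀ t, 1 ≤ dt t := fun t => (hdeg t).choose_spec.1
  have hzt : ∀ t, z t ∈ ℬ (dt t) := fun t => (hdeg t).choose_spec.2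
  -- nilpotency exponents
  have hnil : ∀ t : Fin m, ∃ n : ℕ, (z t) ^ n ∈ ann Z x := by
    intro t
    obtain ⟨n, hn⟩ := loc_nilp Z hsupp x (hdt1 t) (hzt t)
    exact ⟨n, kll_mem_ann Z ⟨_, SetLike.pow_mem_graded n (hzt t), hn⟩⟩
  set nt : Fin m → ℕ := fun t => (hnil t).choose with hnt
  have hntz : ∀ t, (z t) ^ (nt t) ∈ ann Z x := fun t => (hnil t).choose_spec
  -- global constants
  have : Nonempty (Fin m) := ⟨⟨0, hmpos⟩⟩
  set D : ℤ := Finset.univ.sup' (Finset.univ_nonempty) dt with hD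
  have hDt : ∀ t, dt t ≤ D := fun t => Finset.le_sup' dt (Finset.mem_univ t)
  have hD1 : 1 ≤ D := le_trans (hdt1 ⟨0, hmpos⟩) (hDt ⟨0, hmpos⟩)
  set N : ℕ := (∑ t, nt t) + 1 with hNdef
  -- ideals of k-fold products
  set W : ℕ → Set A := fun k => {w : A | ∃ f : Fin k → Fin m, w = ∏ u, z (f u)} with hW
  set K : ℕ → Ideal A := fun k => ann Z x ⊔ Ideal.span (W k) with hK
  -- multiplication into the next stage
  have hmul : ∀ (k : ℕ) (t : Fin m) (u : A), u ∈ K k → u * z t ∈ K (k + 1) := by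
    intro k t u hu
    obtain ⟨q, hq, w', hw', hqw⟩ := Submodule.mem_sup.mp hu
    have h1 : q * z t ∈ ann Z x := Ideal.mul_mem_right _ _ hq
    have h2 : ∀ w'' ∈ Ideal.span (W k), w'' * z t ∈ Ideal.span (W (k + 1)) := by
      intro w'' hw''
      induction hw'' using Submodule.span_induction with
      | mem w hwW =>
        obtain ⟨f, rfl⟩ := hwW
        apply Ideal.subset_span
        refine ⟨(Fin.cons t f : Fin (k + 1) → Fin m), ?_⟩
        calc (∏ u, z (f u)) * z t = z t * ∏ u, z (f u) := mul_comm _ _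
          _ = ∏ u : Fin (k + 1), (Fin.cons (z t) (z ∘ f) : Fin (k + 1) → A) u :=
              (Fin.prod_cons (z t) (z ∘ f)).symm
          _ = ∏ u : Fin (k + 1), z ((Fin.cons t f : Fin (k + 1) → Fin m) u) := by
              refine Finset.prod_congr rfl (fun u _ => ?_)
              rw [← Fin.comp_cons]
              rfl
      | zero => rw [zero_mul]; exact Submodule.zero_mem _
      | add w₁ w₂ _ _ hw₁ hw₂ => rw [add_mul]; exact Submodule.add_mem _ hw₁ hw₂
      | smul r w _ hw => rw [smul_mul_assoc]; exact Submodule.smul_mem _ _ hw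
    rw [← hqw, add_mul]
    exact Submodule.add_mem _ (Submodule.mem_sup_left h1)
      (Submodule.mem_sup_right (h2 w' hw'))
  -- the descent claim
  have claimQ : ∀ k : ℕ, ∀ e : ℤ, (k : ℤ) * D + 1 ≤ e → ∀ s ∈ ℬ e, s ∈ K k := by
    intro k
    induction k with
    | zero =>
      intro e he s hs
      have hone : (1 : A) ∈ K 0 := by
        refine Submodule.mem_sup_right (Ideal.subset_span ⟨Fin.elim0, ?_⟩)
        simp
      exact (Ideal.eq_top_iff_one _).mpr hone ▸ Submodule.mem_top
    | succ k ih =>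
      intro e he s hs
      have hcast : ((k + 1 : ℕ) : ℤ) * D = (k : ℤ) * D + D := by push_cast; ring
      have he1 : 1 ≤ e := by
        have hk0 : 0 ≤ (k : ℤ) * D := mul_nonneg (Int.natCast_nonneg k) (by omega)
        omega
      have hcov := hcover e he1 s hs
      obtain ⟨q, hq, w', hw', hqw⟩ := Submodule.mem_sup.mp hcov
      rw [show Ideal.span {z' : A | z' ∈ zl} = Ideal.span (Set.range z) by rw [hrange]] at hw'
      obtain ⟨c, hc⟩ := Ideal.mem_span_range_iff_exists_fun.mp hw'
      have hdec := congrArg (decHom ℬ e) hqw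
      rw [map_add] at hdec
      have hss : decHom ℬ e s = s := DirectSum.decompose_of_mem_same ℬ hs
      have hw'' : decHom ℬ e w' = ∑ t, decHom ℬ (e - dt t) (c t) * z t := by
        rw [← hc, map_sum]
        exact Finset.sum_congr rfl (fun t _ => by
          rw [decHom_apply, decHom_apply, dec_mul_right (hzt t)])
      have hrepr : s = decHom ℬ e q + ∑ t, decHom ℬ (e - dt t) (c t) * z t := by
        rw [← hw'', hdec, hss]
      rw [hrepr]
      refine Submodule.add_mem _ (Submodule.mem_sup_left ((ann_homog Z x) _ hq)) ?_
      refine Submodule.sum_mem _ (fun t _ => ?_)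
      refine hmul k t _ (ih (e - dt t) ?_ _ (decHom_mem _ _))
      have := hDt t
      omega
  -- N-fold products annihilate
  have hWN : Ideal.span (W N) ≤ ann Z x := by
    rw [Ideal.span_le]
    rintro w ⟨f, rfl⟩
    -- pigeonhole
    have hcard : (Finset.univ : Finset (Fin N)).card =
        ∑ t : Fin m, ((Finset.univ : Finset (Fin N)).filter (fun u => f u = t)).card :=
      Finset.card_eq_sum_card_fiberwise (fun u _ => Finset.mem_univ (f u))
    have hlt : ∑ t : Fin m, nt t < ∑ t : Fin m, ((Finset.univ : Finset (Fin N)).filter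
        (fun u => f u = t)).card := by
      rw [← hcard]
      simp only [Finset.card_univ, Fintype.card_fin]
      omega
    obtain ⟨t₀, -, ht₀⟩ := Finset.exists_lt_of_sum_lt hlt
    -- rewrite the product fiberwise
    have hprod : (∏ u, z (f u)) =
        ∏ t : Fin m, z t ^ ((Finset.univ : Finset (Fin N)).filter (fun u => f u = t)).card := by
      rw [← Finset.prod_fiberwise' Finset.univ f z]
      exact Finset.prod_congr rfl (fun t _ => by rw [Finset.prod_const])
    rw [hprod, ← Finset.mul_prod_erase _ _ (Finset.mem_univ t₀)]
    set ct := ((Finset.univ : Finset (Fin N)).filter (fun u => f u = t₀)).card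
    have hz0 : z t₀ ^ ct ∈ ann Z x := by
      have : z t₀ ^ ct = z t₀ ^ (nt t₀) * z t₀ ^ (ct - nt t₀) := by
        rw [← pow_add]
        congr 1
        omega
      rw [this]
      exact Ideal.mul_mem_right _ _ (hntz t₀)
    exact Ideal.mul_mem_right _ _ hz0
  -- conclusion
  refine ⟨(N : ℤ) * D + 1, by
    have : 0 ≤ (N : ℤ) * D := mul_nonneg (Int.natCast_nonneg N) (by omega)
    omega, fun e he s hs => ?_⟩
  have hsK := claimQ N e he s hs
  have hsann : s ∈ ann Z x := by
    have : K N ≤ ann Z x := sup_le le_rfl hWN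
    exact this hsK
  exact ann_kill Z hsann hs

/-- The second half of the statement. -/
lemma dir2 (hn : EvNoeth Z X Y) (hsupp : supp Z X Y = ∅) : EvZero X Y := by
  classical
  obtain ⟨j₀, hj⟩ := hn
  have hN := hj j₀ le_rfl
  obtain ⟨L, hL, hLfull⟩ := exists_fin_gens Z hN
  -- bounds for each generator
  have haux : ∀ L' : List (Σ d : ℤ, ExtO X Y d), (∀ g ∈ L', j₀ ≤ g.1) →
      ∃ j₃ : ℤ, j₀ ≤ j₃ ∧ ∀ g ∈ L', ∃ E : ℤ, 1 ≤ E ∧ g.1 + E ≤ j₃ ∧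
        ∀ e : ℤ, E ≤ e → ∀ (s : A) (hs : s ∈ ℬ e), act Z (⟨s, hs⟩ : ℬ e) g.2 = 0 := by
    intro L' hL'
    induction L' with
    | nil => exact ⟨j₀, le_rfl, by simp⟩
    | cons g t ih =>
      obtain ⟨E, hE1, hEkill⟩ := elem_bound Z hN hsupp (hL' g List.mem_cons_self) g.2
      obtain ⟨j₃, hj₃, hall⟩ := ih (fun g' hg' => hL' g' (List.mem_cons_of_mem _ hg'))
      refine ⟨max j₃ (g.1 + E), le_trans hj₃ (le_max_left _ _), ?_⟩
      intro g' hg'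
      rcases List.mem_cons.mp hg' with rfl | hg'
      · exact ⟨E, hE1, le_max_right _ _, hEkill⟩
      · obtain ⟨E', hE1', hle', hkill'⟩ := hall g' hg'
        exact ⟨E', hE1', le_trans hle' (le_max_left _ _), hkill'⟩
  obtain ⟨j₃, hj₃, hbound⟩ := haux L hL
  refine ⟨j₃ + 1, fun c hc => ?_⟩
  -- every element of degree c is zero
  have hzero : ∀ w : ExtO X Y c, w = 0 := by
    intro w
    have hw := hLfull c (by omega) w
    have hbot : (listSpan Z L).carrier c ≤ ⊥ := by
      refine (AddSubgroup.closure_le _).mpr ?_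
      rintro w' ⟨g, hg, hw'⟩
      obtain ⟨E, hE1, hle, hkill⟩ := hbound g hg
      rcases hw' with ⟨h, rfl⟩ | ⟨i, a, h, rfl⟩
      · omega
      · have hia : E ≤ i := by omega
        have := hkill i hia (a : A) a.2
        have ha : act Z a g.2 = 0 := by
          rw [show a = (⟨(a : A), a.2⟩ : ℬ i) from rfl]
          exact this
        rw [ha, extCast_zero]
        exact AddSubgroup.mem_bot.mpr rfl
    exact AddSubgroup.mem_bot.mp (hbot hw)
  exact ⟨fun a b => by rw [hzero a, hzero b]⟩

/-- The first half of the statement. -/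
lemma dir1 (h : EvZero X Y) : supp Z X Y = ∅ := by
  obtain ⟨j₀, hj⟩ := h
  rw [Set.eq_empty_iff_forall_notMem]
  rintro p ⟨⟨hprime, hhom, hnot⟩, j, x, hx0, hact⟩
  push_neg at hnot
  obtain ⟨i, hi1, hnsub⟩ := hnot
  obtain ⟨s, hsB, hsp⟩ := Set.not_subset.mp hnsub
  obtain ⟨k, hkk⟩ : ∃ k : ℕ, j₀ - j ≤ (k : ℤ) := ⟨(j₀ - j).toNat, Int.self_le_toNat _⟩
  have hki : (k : ℤ) ≤ k • i := by
    rw [nsmul_eq_mul]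
    exact le_mul_of_one_le_right (Int.natCast_nonneg k) hi1
  have hdeg : j₀ ≤ k • i + j := by omega
  have hsub : Subsingleton (ExtO X Y (k • i + j)) := hj _ hdeg
  have hskp : s ^ k ∉ p := by
    intro hmem
    rcases Nat.eq_zero_or_pos k with rfl | hkpos
    · rw [pow_zero] at hmem
      exact hprime.ne_top ((Ideal.eq_top_iff_one _).mpr hmem)
    · exact hsp (hprime.mem_of_pow_mem k hmem)
  have := hact (k • i) ⟨s ^ k, SetLike.pow_mem_graded k hsB⟩ hskp
  exact this (Subsingleton.elim _ _)

end Layer5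

end CohSupp

namespace CohSupp

theorem statement_14' {R : Type u} [Ring R] [HasDerivedCategory.{w} (ModuleCat.{u} R)]
    {A : Type v} [CommRing A] {ℬ : ℤ → AddSubgroup A} [GradedRing ℬ]
    (Z : CentralOps R A ℬ) (M N : Cx R) :
    (EvZero (dQ.obj M) (dQ.obj N) → supp Z (dQ.obj M) (dQ.obj N) = ∅) ∧
    (EvNoeth Z (dQ.obj M) (dQ.obj N) → supp Z (dQ.obj M) (dQ.obj N) = ∅ →
      EvZero (dQ.obj M) (dQ.obj N)) :=
  ⟨dir1 Z, fun hn hs => dir2 Z hn hs⟩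

end CohSupp

namespace CohSupp

/-- Let `A` be a ring of central cohomology operations on `D(R)` and
`M`, `N` complexes of `R`-modules.  If `Ext*_R(M,N)` is eventually zero then
`Supp*_A(M,N) = ∅`; conversely, if `Ext*_R(M,N)` is eventually noetherian over `A` and
`Supp*_A(M,N) = ∅`, then `Ext*_R(M,N)` is eventually zero. -/
theorem statement_14 {R : Type u} [Ring R] [HasDerivedCategory.{w} (ModuleCat.{u} R)]
    {A : Type v} [CommRing A] {ℬ : ℤ → AddSubgroup A} [GradedRing ℬ]
    (Z : CentralOps R A ℬ) (M N : Cx R) :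
    (EvZero (dQ.obj M) (dQ.obj N) → supp Z (dQ.obj M) (dQ.obj N) = ∅) ∧
    (EvNoeth Z (dQ.obj M) (dQ.obj N) → supp Z (dQ.obj M) (dQ.obj N) = ∅ →
      EvZero (dQ.obj M) (dQ.obj N)) :=
  ⟨dir1 Z, fun hn hs => dir2 Z hn hs⟩

end CohSupp
end
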